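/- Confluence limit of the (1,2) Stokes multiplier: as α → ∞ along the ray arg(α) = +π/2, the quantity (-e^{iπ(γ-α-β)}/sin(π(α+β-γ))) · α^{γ-2β} · Γ(β+1-α)/Γ(γ+1-α-β) · π/(Γ(β)Γ(β+1-γ)) tends to 2πi·e^{iπ(γ-2β)}/(Γ(β)Γ(β+1-γ)). -/

import Mathlib

open Filter Complex

open Topology

lemma log_sub_log {x y : ℂ} (hx : x ≠ 0) (hy : y ≠ 0)
    (h1 : -Real.pi < x.arg - y.arg) (h2 : x.arg - y.arg < Real.pi) :
    Complex.log x - Complex.log y = Complex.log (x / y) := by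
  have hxy : x / y ≠ 0 := div_ne_zero hx hy
  have hexp : Complex.exp (Complex.log x - Complex.log y) = Complex.exp (Complex.log (x / y)) := by
    rw [Complex.exp_sub, Complex.exp_log hx, Complex.exp_log hy, Complex.exp_log hxy]
  obtain ⟨n, hn⟩ := Complex.exp_eq_exp_iff_exists_int.mp hexp
  have him : x.arg - y.arg = (x / y).arg + n * (2 * Real.pi) := by
    have := congrArg Complex.im hn
    simpa [Complex.log_im, Complex.sub_im, Complex.add_im, Complex.mul_im] using this
  have hπ : 0 < Real.pi := Real.pi_pos
  have ha1 : -Real.pi < (x / y).arg := Complex.neg_pi_lt_arg _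
  have ha2 : (x / y).arg ≤ Real.pi := Complex.arg_le_pi _
  have hn0 : n = 0 := by
    rcases lt_trichotomy n 0 with h | h | h
    · have : (n : ℝ) ≤ -1 := by exact_mod_cast Int.le_sub_one_of_lt h
      nlinarith
    · exact h
    · have : (1 : ℝ) ≤ n := by exact_mod_cast h
      nlinarith
  rw [hn0] at hn
  simpa using hn
lemma prod_sub_one_norm_le (a : ℕ → ℂ) (ε : ℕ → ℝ) (hε : ∀ j, 0 ≤ ε j)
    (n : ℕ) (h : ∀ j, j < n → ‖a j - 1‖ ≤ ε j) :
    ‖∏ j ∈ Finset.range n, a j - 1‖ ≤ Real.exp (∑ j ∈ Finset.range n, ε j) - 1 := by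
  induction n with
  | zero => simp
  | succ n ih =>
    have ih' := ih (fun j hj => h j (hj.trans (Nat.lt_succ_self n)))
    have hb : ‖a n - 1‖ ≤ ε n := h n (Nat.lt_succ_self n)
    have han : ‖a n‖ ≤ 1 + ε n := by
      calc ‖a n‖ = ‖(a n - 1) + 1‖ := by ring_nf
      _ ≤ ‖a n - 1‖ + ‖(1:ℂ)‖ := norm_add_le _ _
      _ = ‖a n - 1‖ + 1 := by norm_num
      _ ≤ 1 + ε n := by linarith
    rw [Finset.prod_range_succ, Finset.sum_range_succ]
    have key : (∏ j ∈ Finset.range n, a j) * a n - 1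
        = (∏ j ∈ Finset.range n, a j - 1) * a n + (a n - 1) := by ring
    rw [key]
    have h1 : ‖(∏ j ∈ Finset.range n, a j - 1) * a n + (a n - 1)‖
        ≤ (Real.exp (∑ j ∈ Finset.range n, ε j) - 1) * (1 + ε n) + ε n := by
      calc ‖(∏ j ∈ Finset.range n, a j - 1) * a n + (a n - 1)‖
          ≤ ‖∏ j ∈ Finset.range n, a j - 1‖ * ‖a n‖ + ‖a n - 1‖ := by
            refine le_trans (norm_add_le _ _) ?_
            rw [norm_mul]
      _ ≤ (Real.exp (∑ j ∈ Finset.range n, ε j) - 1) * (1 + ε n) + ε n := by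
            have h0 : (0:ℝ) ≤ ‖a n‖ := norm_nonneg _
            have h2 : (1:ℝ) ≤ Real.exp (∑ j ∈ Finset.range n, ε j) :=
              Real.one_le_exp (Finset.sum_nonneg fun j _ => hε j)
            nlinarith [norm_nonneg (∏ j ∈ Finset.range n, a j - 1)]
    refine h1.trans ?_
    have h3 : (1:ℝ) + ε n ≤ Real.exp (ε n) := by linarith [Real.add_one_le_exp (ε n)]
    have h4 : (1:ℝ) ≤ Real.exp (∑ j ∈ Finset.range n, ε j) :=
      Real.one_le_exp (Finset.sum_nonneg fun j _ => hε j)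
    rw [Real.exp_add]
    nlinarith [Real.exp_pos (∑ j ∈ Finset.range n, ε j), Real.exp_pos (ε n)]

lemma summable_aux (w : ℂ) : Summable (fun j : ℕ => (‖w + j‖ ^ 2)⁻¹) := by
  obtain ⟨N, hN⟩ := exists_nat_ge (‖w‖ + 1)
  rw [← summable_nat_add_iff N]
  have base : Summable (fun j : ℕ => (((j : ℝ) + 1) ^ 2)⁻¹) := by
    have h1 : Summable (fun n : ℕ => 1 / (n : ℝ) ^ 2) :=
      Real.summable_one_div_nat_pow.mpr one_lt_two
    have := (summable_nat_add_iff 1).mpr h1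
    simpa [one_div] using this
  refine base.of_nonneg_of_le (fun j => by positivity) (fun j => ?_)
  have hle : (j : ℝ) + 1 ≤ ‖w + ((j + N : ℕ) : ℂ)‖ := by
    have htri : ‖((j + N : ℕ) : ℂ)‖ ≤ ‖w + ((j + N : ℕ) : ℂ)‖ + ‖w‖ := by
      have := norm_add_le (w + ((j + N : ℕ) : ℂ)) (-w)
      simpa using this
    have habs : ‖((j + N : ℕ) : ℂ)‖ = (j : ℝ) + N := by
      rw [Complex.norm_natCast]; push_cast; ring
    rw [habs] at htri
    linarith
  have hpos : (0:ℝ) < (j : ℝ) + 1 := by positivity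
  have := sq_le_sq' (by linarith [norm_nonneg (w + ((j + N : ℕ) : ℂ))]) hle
  refine inv_anti₀ (by positivity) ?_
  nlinarith [norm_nonneg (w + ((j + N : ℕ) : ℂ))]
lemma term_bound (δ : ℂ) {v : ℂ} (hv : v.im < 0)
    (hv2 : 2 + 2 * (‖δ‖ + 1) ≤ ‖v‖) :
    ‖Complex.exp (δ * (Complex.log v - Complex.log (v + 1))) * (1 + δ / v) - 1‖
      ≤ (9 * ‖δ‖ ^ 2 + 2 * ‖δ‖) * (‖v‖ ^ 2)⁻¹ := by
  have hd0 : (0:ℝ) ≤ ‖δ‖ := norm_nonneg δ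
  have hR : (2:ℝ) ≤ ‖v‖ := by linarith
  have hvpos : (0:ℝ) < ‖v‖ := by linarith
  have hv0 : v ≠ 0 := by
    intro h; rw [h] at hv; simp at hv
  have hv1 : v + 1 ≠ 0 := by
    intro h
    have : (v + 1).im = 0 := by rw [h]; simp
    simp [Complex.add_im] at this; linarith
  have hargv : v.arg < 0 := Complex.arg_neg_iff.mpr hv
  have hargv1 : (v + 1).arg < 0 := Complex.arg_neg_iff.mpr (by simpa using hv)
  have hl : Complex.log (v + 1) - Complex.log v = Complex.log (1 + 1 / v) := by
    have h := log_sub_log hv1 hv0 (by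
        have := Complex.neg_pi_lt_arg (v + 1); linarith [Complex.neg_pi_lt_arg v])
      (by linarith [Complex.neg_pi_lt_arg v, Real.pi_pos])
    rw [h]; congr 1; field_simp
  set u : ℂ := 1 / v with hu_def
  have hun : ‖u‖ = (‖v‖)⁻¹ := by
    simp [hu_def, map_div₀]
  have hun2 : ‖u‖ ^ 2 = (‖v‖ ^ 2)⁻¹ := by rw [hun, inv_pow]
  have hu_half : ‖u‖ ≤ 1 / 2 := by
    rw [hun]
    rw [inv_le_comm₀ hvpos (by norm_num)]
    linarith
  set e₁ : ℂ := Complex.log (1 + u) - u with he1_def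
  have he1 : ‖e₁‖ ≤ ‖u‖ ^ 2 := by
    have h := Complex.norm_log_one_add_sub_self_le (z := u) (by linarith)
    have h2 : (1 - ‖u‖)⁻¹ ≤ 2 := by
      rw [inv_le_comm₀ (by linarith) (by norm_num)]; linarith
    calc ‖e₁‖ ≤ ‖u‖ ^ 2 * (1 - ‖u‖)⁻¹ / 2 := h
    _ ≤ ‖u‖ ^ 2 * 2 / 2 := by
        have : (0:ℝ) ≤ ‖u‖ ^ 2 := sq_nonneg _
        gcongr
    _ = ‖u‖ ^ 2 := by ring
  have hdu : δ * u = δ / v := by rw [hu_def]; ring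
  have harg : δ * (Complex.log v - Complex.log (v + 1)) = -(δ / v) + -(δ * e₁) := by
    have hsum : Complex.log (v + 1) - Complex.log v = u + e₁ := by
      rw [hl, he1_def]; ring
    have : Complex.log v - Complex.log (v + 1) = -(u + e₁) := by
      rw [← hsum]; ring
    rw [this, ← hdu]; ring
  have hsplit : Complex.exp (δ * (Complex.log v - Complex.log (v + 1))) * (1 + δ / v)
      = (Complex.exp (-(δ / v)) * (1 + δ / v)) * Complex.exp (-(δ * e₁)) := by
    rw [harg, Complex.exp_add]; ring
  have hdvn : ‖δ / v‖ = ‖δ‖ * (‖v‖)⁻¹ := by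
    simp [map_div₀, div_eq_mul_inv]
  have hdv_half : ‖δ / v‖ ≤ 1 / 2 := by
    rw [hdvn]
    have h1 : ‖δ‖ ≤ ‖v‖ / 2 := by linarith
    calc ‖δ‖ * (‖v‖)⁻¹ ≤ (‖v‖ / 2) * (‖v‖)⁻¹ := by gcongr
    _ = 1 / 2 := by field_simp
  have hA : ‖Complex.exp (-(δ / v)) * (1 + δ / v) - 1‖ ≤ 3 * ‖δ / v‖ ^ 2 := by
    have key : Complex.exp (-(δ / v)) * (1 + δ / v) - 1
        = (Complex.exp (-(δ / v)) - 1 - (-(δ / v))) * (1 + δ / v) - (δ / v) ^ 2 := by ring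
    rw [key]
    have h1 : ‖Complex.exp (-(δ / v)) - 1 - (-(δ / v))‖ ≤ ‖δ / v‖ ^ 2 := by
      have := Complex.norm_exp_sub_one_sub_id_le (x := -(δ / v)) (by
        simpa using hdv_half.trans (by norm_num))
      simpa using this
    have h2 : ‖(1 : ℂ) + δ / v‖ ≤ 2 := by
      calc ‖(1:ℂ) + δ / v‖ ≤ ‖(1:ℂ)‖ + ‖δ / v‖ := norm_add_le _ _
      _ ≤ 1 + 1/2 := by rw [norm_one]; linarith
      _ ≤ 2 := by norm_num
    calc ‖(Complex.exp (-(δ / v)) - 1 - (-(δ / v))) * (1 + δ / v) - (δ / v) ^ 2‖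
        ≤ ‖(Complex.exp (-(δ / v)) - 1 - (-(δ / v))) * (1 + δ / v)‖ + ‖(δ / v) ^ 2‖ :=
          norm_sub_le _ _
    _ = ‖Complex.exp (-(δ / v)) - 1 - (-(δ / v))‖ * ‖(1:ℂ) + δ / v‖ + ‖δ / v‖ ^ 2 := by
          rw [norm_mul, norm_pow]
    _ ≤ ‖δ / v‖ ^ 2 * 2 + ‖δ / v‖ ^ 2 := by
          have := sq_nonneg ‖δ / v‖
          nlinarith [norm_nonneg (Complex.exp (-(δ / v)) - 1 - (-(δ / v)))]
    _ = 3 * ‖δ / v‖ ^ 2 := by ring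
  have hde1 : ‖δ * e₁‖ ≤ ‖δ‖ * ‖u‖ ^ 2 := by
    rw [norm_mul]
    exact mul_le_mul_of_nonneg_left he1 hd0
  have hde1_small : ‖δ * e₁‖ ≤ 1 / 2 := by
    refine hde1.trans ?_
    rw [hun2]
    have h1 : ‖δ‖ ≤ ‖v‖ := by linarith
    have h2 : ‖δ‖ * (‖v‖ ^ 2)⁻¹ ≤ ‖v‖ * (‖v‖ ^ 2)⁻¹ := by
      gcongr
    have h3 : ‖v‖ * (‖v‖ ^ 2)⁻¹ = (‖v‖)⁻¹ := by
      field_simp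
    rw [h3] at h2
    refine h2.trans ?_
    rw [inv_le_comm₀ hvpos (by norm_num)]; linarith
  have hB : ‖Complex.exp (-(δ * e₁)) - 1‖ ≤ 2 * (‖δ‖ * ‖u‖ ^ 2) := by
    have := Complex.norm_exp_sub_one_le (x := -(δ * e₁)) (by
      simpa using hde1_small.trans (by norm_num))
    simp only [norm_neg] at this
    exact this.trans (by linarith [hde1])
  have hBn : ‖Complex.exp (-(δ * e₁))‖ ≤ 2 := by
    calc ‖Complex.exp (-(δ * e₁))‖ = ‖(Complex.exp (-(δ * e₁)) - 1) + 1‖ := by ring_nf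
    _ ≤ ‖Complex.exp (-(δ * e₁)) - 1‖ + ‖(1:ℂ)‖ := norm_add_le _ _
    _ ≤ 2 * ‖δ * e₁‖ + 1 := by
        rw [norm_one]
        have := Complex.norm_exp_sub_one_le (x := -(δ * e₁)) (by
          simpa using hde1_small.trans (by norm_num))
        simp only [norm_neg] at this
        linarith
    _ ≤ 2 := by linarith
  rw [hsplit]
  have final : Complex.exp (-(δ / v)) * (1 + δ / v) * Complex.exp (-(δ * e₁)) - 1
      = (Complex.exp (-(δ / v)) * (1 + δ / v) - 1) * Complex.exp (-(δ * e₁))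
        + (Complex.exp (-(δ * e₁)) - 1) := by ring
  rw [final]
  have hdvn2 : ‖δ / v‖ ^ 2 = ‖δ‖ ^ 2 * (‖v‖ ^ 2)⁻¹ := by
    rw [hdvn, mul_pow, inv_pow]
  calc ‖(Complex.exp (-(δ / v)) * (1 + δ / v) - 1) * Complex.exp (-(δ * e₁))
        + (Complex.exp (-(δ * e₁)) - 1)‖
      ≤ ‖Complex.exp (-(δ / v)) * (1 + δ / v) - 1‖ * ‖Complex.exp (-(δ * e₁))‖
        + ‖Complex.exp (-(δ * e₁)) - 1‖ := by
        refine le_trans (norm_add_le _ _) ?_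
        rw [norm_mul]
  _ ≤ 3 * ‖δ / v‖ ^ 2 * 2 + 2 * (‖δ‖ * ‖u‖ ^ 2) := by
      nlinarith [norm_nonneg (Complex.exp (-(δ / v)) * (1 + δ / v) - 1),
        norm_nonneg (Complex.exp (-(δ * e₁))), sq_nonneg ‖δ / v‖]
  _ ≤ (9 * ‖δ‖ ^ 2 + 2 * ‖δ‖) * (‖v‖ ^ 2)⁻¹ := by
      rw [hdvn2, hun2]
      have : (0:ℝ) ≤ (‖v‖ ^ 2)⁻¹ := by positivity
      nlinarith [sq_nonneg (‖δ‖)]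
lemma F_bound (δ : ℂ) {w : ℂ} (hw : w.im ≤ -(2 + 2 * (‖δ‖ + 1))) :
    ‖Complex.exp (δ * Complex.log w) * Complex.Gamma w / Complex.Gamma (w + δ) - 1‖
      ≤ Real.exp ((9 * ‖δ‖ ^ 2 + 2 * ‖δ‖)
          * ∑' j : ℕ, (‖w + j‖ ^ 2)⁻¹) - 1 := by
  have hd0 : (0:ℝ) ≤ ‖δ‖ := norm_nonneg δ
  have hdim : |δ.im| ≤ ‖δ‖ := Complex.abs_im_le_norm δ
  have hwim : w.im < 0 := by linarith
  have him : ∀ j : ℕ, (w + (j:ℂ)).im = w.im := by intro j; simp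
  have habs : ∀ j : ℕ, 2 + 2 * (‖δ‖ + 1) ≤ ‖w + j‖ := by
    intro j
    have h1 : |(w + (j:ℂ)).im| ≤ ‖w + j‖ := Complex.abs_im_le_norm _
    rw [him j, abs_of_neg hwim] at h1
    linarith
  have hne : ∀ j : ℕ, w + (j:ℂ) ≠ 0 := by
    intro j h
    have := him j
    rw [h] at this; simp at this; linarith
  have hne' : ∀ j : ℕ, w + δ + (j:ℂ) ≠ 0 := by
    intro j h
    have : (w + δ + (j:ℂ)).im = w.im + δ.im := by simp
    rw [h] at this; simp at this
    have := abs_le.mp hdim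
    linarith
  have hGw : Complex.Gamma (w + δ) ≠ 0 := by
    refine Complex.Gamma_ne_zero (fun m hm => ?_)
    have : (w + δ).im = w.im + δ.im := by simp
    rw [hm] at this; simp at this
    have := abs_le.mp hdim
    linarith
  set K : ℝ := 9 * ‖δ‖ ^ 2 + 2 * ‖δ‖ with hK_def
  have hK0 : 0 ≤ K := by positivity
  set T : ℝ := ∑' j : ℕ, (‖w + j‖ ^ 2)⁻¹ with hT_def
  have hsummable := summable_aux w
  set f : ℕ → ℂ := fun j => Complex.log (w + j) with hf_def
  set a : ℕ → ℂ := fun j => Complex.exp (δ * (f j - f (j + 1))) * (1 + δ / (w + j))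
    with ha_def
  have hterm : ∀ j : ℕ, ‖a j - 1‖ ≤ K * (‖w + j‖ ^ 2)⁻¹ := by
    intro j
    have hcast : f (j + 1) = Complex.log (w + (j:ℂ) + 1) := by
      rw [hf_def]; push_cast; ring_nf
    have := term_bound δ (v := w + (j:ℂ)) (by rw [him j]; exact hwim) (habs j)
    rw [ha_def]
    simpa [hcast] using this
  -- bound on partial products
  have hsum_le : ∀ n : ℕ,
      ∑ j ∈ Finset.range n, K * (‖w + j‖ ^ 2)⁻¹ ≤ K * T := by
    intro n
    rw [← Finset.mul_sum]
    refine mul_le_mul_of_nonneg_left ?_ hK0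
    exact hsummable.sum_le_tsum _ (fun j _ => by positivity)
  have hP : ∀ n : ℕ, ‖∏ j ∈ Finset.range n, a j - 1‖ ≤ Real.exp (K * T) - 1 := by
    intro n
    refine le_trans (prod_sub_one_norm_le a (fun j => K * (‖w + j‖ ^ 2)⁻¹)
      (fun j => by positivity) n (fun j _ => hterm j)) ?_
    have h := hsum_le n
    have := Real.exp_le_exp.mpr h
    linarith
  -- convergence of partial products to the Gamma expression
  set L : ℂ := Complex.exp (δ * Complex.log w) * Complex.Gamma w / Complex.Gamma (w + δ)
    with hL_def
  have hQ : Tendsto (fun n : ℕ => Complex.exp (δ * Complex.log w)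
      * (Complex.GammaSeq w n / Complex.GammaSeq (w + δ) n)) atTop
      (𝓝 (Complex.exp (δ * Complex.log w) * (Complex.Gamma w / Complex.Gamma (w + δ)))) :=
    ((Complex.GammaSeq_tendsto_Gamma w).div (Complex.GammaSeq_tendsto_Gamma (w + δ)) hGw).const_mul _
  set c : ℕ → ℂ := fun n => Complex.exp (δ * (Complex.log (w + n + 1) - Complex.log n))
    with hc_def
  have hc : Tendsto c atTop (𝓝 1) := by
    have hinv : Tendsto (fun n : ℕ => ((n:ℂ))⁻¹) atTop (𝓝 0) := by
      have h1 : Tendsto (fun n : ℕ => ((n:ℝ))⁻¹) atTop (𝓝 0) :=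
        tendsto_inv_atTop_zero.comp tendsto_natCast_atTop_atTop
      have h2 := (Complex.continuous_ofReal.tendsto 0).comp h1
      simp only [Function.comp_def, Complex.ofReal_inv, Complex.ofReal_natCast,
        Complex.ofReal_zero] at h2
      exact h2
    have hq : Tendsto (fun n : ℕ => (w + n + 1) / (n:ℂ)) atTop (𝓝 1) := by
      have h3 : Tendsto (fun n : ℕ => (w + 1) * ((n:ℂ))⁻¹ + 1) atTop (𝓝 1) := by
        have := (hinv.const_mul (w + 1)).add (tendsto_const_nhds (x := (1:ℂ)))
        simpa using this
      refine Tendsto.congr' ?_ h3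
      filter_upwards [eventually_ge_atTop 1] with n hn
      have hn0 : (n:ℂ) ≠ 0 := Nat.cast_ne_zero.mpr (by omega)
      field_simp
      ring
    have hlog : Tendsto (fun n : ℕ => Complex.log (w + n + 1) - Complex.log n) atTop (𝓝 0) := by
      have hcont : ContinuousAt Complex.log 1 :=
        continuousAt_clog (by simp [Complex.mem_slitPlane_iff])
      have h4 := (hcont.tendsto.comp hq)
      rw [Complex.log_one] at h4
      refine Tendsto.congr' ?_ h4
      filter_upwards [eventually_ge_atTop 1] with n hn
      have hn0 : (n:ℂ) ≠ 0 := Nat.cast_ne_zero.mpr (by omega)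
      have him1 : (w + (n:ℂ) + 1).im < 0 := by simp [hwim]
      have hx0 : w + (n:ℂ) + 1 ≠ 0 := by
        intro h; rw [h] at him1; simp at him1
      symm
      refine (log_sub_log hx0 hn0 ?_ ?_).symm ▸ rfl
      · rw [Complex.natCast_arg]
        have := Complex.neg_pi_lt_arg (w + (n:ℂ) + 1); linarith
      · rw [Complex.natCast_arg]
        have : (w + (n:ℂ) + 1).arg < 0 := Complex.arg_neg_iff.mpr him1
        linarith [Real.pi_pos]
    have h5' : Tendsto (fun n : ℕ => δ * (Complex.log (w + n + 1) - Complex.log n)) atTop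
        (𝓝 0) := by simpa using hlog.const_mul δ
    have h5 := (Complex.continuous_exp.tendsto 0).comp h5'
    simpa [Function.comp_def] using h5
  -- the key identity
  have hkey : ∀ᶠ n in atTop, ∏ j ∈ Finset.range (n + 1), a j
      = (Complex.exp (δ * Complex.log w)
          * (Complex.GammaSeq w n / Complex.GammaSeq (w + δ) n)) / c n := by
    filter_upwards [eventually_ge_atTop 1] with n hn
    have hn0 : (n:ℂ) ≠ 0 := Nat.cast_ne_zero.mpr (by omega)
    have hfact : ((n.factorial : ℕ) : ℂ) ≠ 0 := by exact_mod_cast Nat.factorial_ne_zero n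
    have hprod1 : ∏ j ∈ Finset.range (n + 1), (w + (j:ℂ)) ≠ 0 :=
      Finset.prod_ne_zero_iff.mpr (fun j _ => hne j)
    have hprod2 : ∏ j ∈ Finset.range (n + 1), (w + δ + (j:ℂ)) ≠ 0 :=
      Finset.prod_ne_zero_iff.mpr (fun j _ => hne' j)
    -- GammaSeq ratio
    have hGS : Complex.GammaSeq w n / Complex.GammaSeq (w + δ) n
        = Complex.exp (-(δ * Complex.log n))
          * ∏ j ∈ Finset.range (n + 1), ((w + δ + j) / (w + j)) := by
      rw [Complex.GammaSeq, Complex.GammaSeq, Finset.prod_div_distrib,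
        Complex.cpow_def_of_ne_zero hn0, Complex.cpow_def_of_ne_zero hn0]
      have hsplit2 : Complex.exp (Complex.log n * (w + δ))
          = Complex.exp (Complex.log n * w) * Complex.exp (δ * Complex.log n) := by
        rw [← Complex.exp_add]; ring_nf
      have hinv2 : Complex.exp (-(δ * Complex.log n))
          = (Complex.exp (δ * Complex.log n))⁻¹ := Complex.exp_neg _
      rw [hsplit2, hinv2]
      field_simp
    -- product of a j
    have hPa : ∏ j ∈ Finset.range (n + 1), a j
        = Complex.exp (δ * (Complex.log w - Complex.log (w + ((n:ℂ) + 1))))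
          * ∏ j ∈ Finset.range (n + 1), ((w + δ + j) / (w + j)) := by
      rw [ha_def]
      rw [Finset.prod_mul_distrib]
      congr 1
      · rw [← Complex.exp_sum]
        congr 1
        rw [← Finset.mul_sum]
        congr 1
        have := Finset.sum_range_sub' f (n + 1)
        rw [this, hf_def]
        push_cast
        simp
      · refine Finset.prod_congr rfl (fun j _ => ?_)
        field_simp [hne j]
        ring
    rw [hPa, hGS, eq_div_iff (Complex.exp_ne_zero _)]
    have hEE : Complex.exp (δ * (Complex.log w - Complex.log (w + ((n:ℂ) + 1))))
        * Complex.exp (δ * (Complex.log (w + (n:ℂ) + 1) - Complex.log (n:ℂ)))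
        = Complex.exp (δ * Complex.log w) * Complex.exp (-(δ * Complex.log (n:ℂ))) := by
      rw [← Complex.exp_add, ← Complex.exp_add]
      have hadd : w + ((n:ℂ) + 1) = w + (n:ℂ) + 1 := by ring
      rw [hadd]
      congr 1
      ring
    rw [mul_right_comm, hEE, mul_assoc]
  have hshift : Tendsto (fun n : ℕ => ∏ j ∈ Finset.range (n + 1), a j) atTop (𝓝 L) := by
    have h6 : Tendsto (fun n : ℕ => (Complex.exp (δ * Complex.log w)
        * (Complex.GammaSeq w n / Complex.GammaSeq (w + δ) n)) / c n) atTop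
        (𝓝 (Complex.exp (δ * Complex.log w) * (Complex.Gamma w / Complex.Gamma (w + δ)) / 1)) :=
      hQ.div hc one_ne_zero
    rw [div_one, ← mul_div_assoc] at h6
    exact Tendsto.congr' (hkey.mono fun n h => h.symm) h6
  have hfull : Tendsto (fun n : ℕ => ∏ j ∈ Finset.range n, a j) atTop (𝓝 L) :=
    (tendsto_add_atTop_iff_nat 1).mp hshift
  have hnorm : Tendsto (fun n : ℕ => ‖∏ j ∈ Finset.range n, a j - 1‖) atTop (𝓝 ‖L - 1‖) :=
    (hfull.sub tendsto_const_nhds).norm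
  exact le_of_tendsto hnorm (Eventually.of_forall hP)
lemma F_tendsto (δ β : ℂ) :
    Tendsto (fun r : ℝ => Complex.exp (δ * Complex.log (β + 1 - (r:ℂ) * Complex.I))
        * Complex.Gamma (β + 1 - (r:ℂ) * Complex.I)
        / Complex.Gamma (β + 1 - (r:ℂ) * Complex.I + δ))
      atTop (𝓝 1) := by
  set w : ℝ → ℂ := fun r => β + 1 - (r:ℂ) * Complex.I with hw_def
  have hwim : ∀ r : ℝ, (w r).im = β.im - r := by
    intro r; simp [hw_def]
  have hwre : ∀ r : ℝ, (w r).re = β.re + 1 := by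
    intro r; simp [hw_def]
  have habs2 : ∀ (r : ℝ) (j : ℕ),
      ‖w r + j‖ ^ 2 = (β.re + 1 + j) ^ 2 + (β.im - r) ^ 2 := by
    intro r j
    rw [Complex.sq_norm, Complex.normSq_apply]
    simp [hw_def]
    ring
  set K : ℝ := 9 * ‖δ‖ ^ 2 + 2 * ‖δ‖ with hK_def
  have hK0 : 0 ≤ K := by positivity
  set T : ℝ → ℝ := fun r => ∑' j : ℕ, (‖w r + j‖ ^ 2)⁻¹ with hT_def
  have hT : Tendsto T atTop (𝓝 0) := by
    set w₀ : ℂ := (β.re + 1 : ℝ) + Complex.I with hw0_def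
    have habs0 : ∀ j : ℕ, ‖w₀ + j‖ ^ 2 = (β.re + 1 + j) ^ 2 + 1 := by
      intro j
      rw [Complex.sq_norm, Complex.normSq_apply]
      simp [hw0_def]
      ring
    have hbound_sum : Summable (fun j : ℕ => (‖w₀ + j‖ ^ 2)⁻¹) := summable_aux w₀
    have h0 : Tendsto (fun r : ℝ => ∑' j : ℕ, (‖w r + j‖ ^ 2)⁻¹) atTop
        (𝓝 (∑' _ : ℕ, (0:ℝ))) := by
      refine tendsto_tsum_of_dominated_convergence hbound_sum (fun j => ?_) ?_
      · -- pointwise convergence to 0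
        have hup : Tendsto (fun r : ℝ => ((r - β.im) ^ 2)⁻¹) atTop (𝓝 0) := by
          refine tendsto_inv_atTop_zero.comp ?_
          refine (tendsto_pow_atTop (two_ne_zero)).comp ?_
          simpa [sub_eq_add_neg] using tendsto_atTop_add_const_right atTop (-β.im) tendsto_id
        refine squeeze_zero' ?_ ?_ hup
        · filter_upwards with r'
          positivity
        filter_upwards [eventually_gt_atTop β.im] with r hr
        rw [habs2 r j]
        have h1 : (r - β.im) ^ 2 ≤ (β.re + 1 + j) ^ 2 + (β.im - r) ^ 2 := by
          nlinarith [sq_nonneg (β.re + 1 + j)]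
        have h2 : (0:ℝ) < (r - β.im) ^ 2 := pow_pos (sub_pos.mpr hr) 2
        exact inv_anti₀ h2 h1
      · filter_upwards [eventually_ge_atTop (β.im + 1)] with r hr j
        have hnn : (0:ℝ) ≤ (‖w r + j‖ ^ 2)⁻¹ := by positivity
        rw [Real.norm_eq_abs, _root_.abs_of_nonneg hnn, habs2 r j, habs0 j]
        have h1 : (1:ℝ) ≤ (β.im - r) ^ 2 := by nlinarith
        refine inv_anti₀ (by positivity) (by nlinarith)
    simpa using h0
  -- the bound
  have hb : Tendsto (fun r : ℝ => Real.exp (K * T r) - 1) atTop (𝓝 0) := by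
    have h1 : Tendsto (fun r : ℝ => K * T r) atTop (𝓝 0) := by
      simpa using hT.const_mul K
    have h2 := (Real.continuous_exp.tendsto 0).comp h1
    simp only [Real.exp_zero] at h2
    have := h2.sub (tendsto_const_nhds (x := (1:ℝ)))
    simpa using this
  rw [tendsto_iff_norm_sub_tendsto_zero]
  refine squeeze_zero' (Eventually.of_forall (fun r => norm_nonneg _)) ?_ hb
  filter_upwards [eventually_ge_atTop (β.im + (2 + 2 * (‖δ‖ + 1)))] with r hr
  refine F_bound δ ?_
  rw [hwim r]
  linarith
lemma phase_tendsto (δ β : ℂ) :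
    Tendsto (fun r : ℝ => Complex.exp (δ * (Complex.log ((r:ℂ) * Complex.I)
        - Complex.log (β + 1 - (r:ℂ) * Complex.I))))
      atTop (𝓝 (Complex.exp (δ * ((Real.pi:ℂ) * Complex.I)))) := by
  set w : ℝ → ℂ := fun r => β + 1 - (r:ℂ) * Complex.I with hw_def
  have hinvC : Tendsto (fun r : ℝ => ((r:ℂ))⁻¹) atTop (𝓝 0) := by
    have h1 : Tendsto (fun r : ℝ => r⁻¹) atTop (𝓝 0) := tendsto_inv_atTop_zero
    have h2 := (Complex.continuous_ofReal.tendsto 0).comp h1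
    simp only [Function.comp_def, Complex.ofReal_inv, Complex.ofReal_zero] at h2
    exact h2
  have hq : Tendsto (fun r : ℝ => w r / (r:ℂ)) atTop (𝓝 (-Complex.I)) := by
    have h3 : Tendsto (fun r : ℝ => (β + 1) * ((r:ℂ))⁻¹ - Complex.I) atTop (𝓝 (-Complex.I)) := by
      have := (hinvC.const_mul (β + 1)).sub (tendsto_const_nhds (x := Complex.I))
      simpa using this
    refine Tendsto.congr' ?_ h3
    filter_upwards [eventually_ge_atTop (1:ℝ)] with r hr
    have hr0 : (r:ℂ) ≠ 0 := by
      simpa using (by linarith : r ≠ 0)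
    rw [hw_def]
    field_simp
  have hwne : ∀ᶠ r : ℝ in atTop, (w r).im < 0 := by
    filter_upwards [eventually_gt_atTop β.im] with r hr
    simp [hw_def]; linarith
  -- real part
  have hu : Tendsto (fun r : ℝ => Real.log r - Real.log (‖w r‖)) atTop (𝓝 0) := by
    have habs : Tendsto (fun r : ℝ => ‖w r / (r:ℂ)‖) atTop (𝓝 1) := by
      have h := (continuous_norm.tendsto (-Complex.I)).comp hq
      simp only [Function.comp_def] at h
      convert h using 2
      simp
    have hlog1 : Tendsto (fun r : ℝ => Real.log (‖w r / (r:ℂ)‖)) atTop (𝓝 0) := by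
      have := ((Real.continuousAt_log one_ne_zero).tendsto).comp habs
      simpa [Function.comp_def] using this
    have heq : ∀ᶠ r : ℝ in atTop, Real.log (‖w r / (r:ℂ)‖)
        = Real.log (‖w r‖) - Real.log r := by
      filter_upwards [eventually_ge_atTop (1:ℝ), hwne] with r hr him
      have hr0 : r ≠ 0 := by linarith
      have hw0 : ‖w r‖ ≠ 0 := by
        intro h
        rw [norm_eq_zero] at h
        rw [h] at him; simp at him
      rw [norm_div]
      rw [Complex.norm_real, Real.norm_eq_abs, abs_of_pos (by linarith : (0:ℝ) < r)]
      exact Real.log_div hw0 hr0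
    have := Tendsto.congr' heq hlog1
    have hneg := this.neg
    simp only [neg_zero] at hneg
    refine hneg.congr (fun r => by ring)
  -- imaginary part
  have hv : Tendsto (fun r : ℝ => Real.pi / 2 - Complex.arg (w r)) atTop (𝓝 Real.pi) := by
    have harg : Tendsto (fun r : ℝ => Complex.arg (w r / (r:ℂ))) atTop (𝓝 (-(Real.pi/2))) := by
      have hsp : -Complex.I ∈ Complex.slitPlane := by
        simp [Complex.mem_slitPlane_iff]
      have := ((Complex.continuousAt_arg hsp).tendsto).comp hq
      simpa [Complex.arg_neg_I, Function.comp_def] using this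
    have heq : ∀ᶠ r : ℝ in atTop, Complex.arg (w r / (r:ℂ)) = Complex.arg (w r) := by
      filter_upwards [eventually_ge_atTop (1:ℝ)] with r hr
      have : w r / (r:ℂ) = ((r⁻¹ : ℝ) : ℂ) * w r := by
        push_cast
        rw [div_eq_inv_mul]
      rw [this, Complex.arg_real_mul _ (by positivity : (0:ℝ) < r⁻¹)]
    have harg2 := Tendsto.congr' heq harg
    have := (tendsto_const_nhds (x := Real.pi / 2)).sub harg2
    simpa [sub_neg_eq_add] using this
  -- combine
  have hg : Tendsto (fun r : ℝ => Complex.log ((r:ℂ) * Complex.I) - Complex.log (w r)) atTop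
      (𝓝 ((Real.pi:ℂ) * Complex.I)) := by
    have h5 : Tendsto (fun r : ℝ => ((Real.log r - Real.log (‖w r‖) : ℝ) : ℂ)
        + ((Real.pi / 2 - Complex.arg (w r) : ℝ) : ℂ) * Complex.I) atTop
        (𝓝 ((Real.pi:ℂ) * Complex.I)) := by
      have h6 := ((Complex.continuous_ofReal.tendsto 0).comp hu).add
        (((Complex.continuous_ofReal.tendsto Real.pi).comp hv).mul_const Complex.I)
      simpa using h6
    refine Tendsto.congr' ?_ h5
    filter_upwards [eventually_ge_atTop (1:ℝ), hwne] with r hr him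
    have hrpos : (0:ℝ) < r := by linarith
    symm
    apply Complex.ext
    · simp only [Complex.sub_re, Complex.log_re, Complex.add_re, Complex.ofReal_re,
        Complex.mul_re, Complex.I_re, Complex.I_im, Complex.ofReal_im]
      have : ‖(r:ℂ) * Complex.I‖ = r := by
        rw [norm_mul, Complex.norm_real, Real.norm_eq_abs, Complex.norm_I, abs_of_pos hrpos, mul_one]
      rw [this]
      ring
    · simp only [Complex.sub_im, Complex.log_im, Complex.add_im, Complex.ofReal_im,
        Complex.mul_im, Complex.I_re, Complex.I_im, Complex.ofReal_re]
      have : Complex.arg ((r:ℂ) * Complex.I) = Real.pi / 2 := by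
        rw [Complex.arg_real_mul _ hrpos, Complex.arg_I]
      rw [this]
      ring
  have h7 := (Complex.continuous_exp.tendsto _).comp (hg.const_mul δ)
  simpa [Function.comp_def] using h7
lemma A_tendsto (β γ : ℂ) :
    Tendsto (fun r : ℝ => -Complex.exp ((Real.pi : ℂ) * Complex.I * (γ - (r:ℂ) * Complex.I - β)) /
        Complex.sin ((Real.pi : ℂ) * ((r:ℂ) * Complex.I + β - γ)))
      atTop (𝓝 (2 * Complex.I)) := by
  set S : ℝ → ℂ := fun r => (Real.pi : ℂ) * ((r:ℂ) * Complex.I + β - γ) with hS_def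
  set E : ℝ → ℂ := fun r => Complex.exp (2 * (S r) * Complex.I) with hE_def
  have hE : Tendsto E atTop (𝓝 0) := by
    rw [tendsto_zero_iff_norm_tendsto_zero]
    have hnorm : ∀ r : ℝ, ‖E r‖ = Real.exp ((-2 * Real.pi) * (r + (β.im - γ.im))) := by
      intro r
      have hre : (2 * S r * Complex.I).re = (-2 * Real.pi) * (r + (β.im - γ.im)) := by
        simp [hS_def, Complex.mul_re, Complex.mul_im, Complex.add_re, Complex.add_im]
        ring
      rw [show E r = Complex.exp (2 * S r * Complex.I) from rfl, 
        Complex.norm_exp, hre]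
    have hlin : Tendsto (fun r : ℝ => (-2 * Real.pi) * (r + (β.im - γ.im))) atTop atBot := by
      refine (tendsto_const_mul_atBot_of_neg (by nlinarith [Real.pi_pos])).mpr ?_
      exact tendsto_atTop_add_const_right atTop _ tendsto_id
    have := Real.tendsto_exp_atBot.comp hlin
    refine Tendsto.congr' (Eventually.of_forall (fun r => (hnorm r).symm)) this
  have hev : ∀ᶠ r : ℝ in atTop, ‖E r‖ < 1 := by
    have := tendsto_zero_iff_norm_tendsto_zero.mp hE
    exact this.eventually_lt_const one_pos |>.mono (fun r h => h)
  have hmain : Tendsto (fun r : ℝ => -2 * Complex.I / (E r - 1)) atTop (𝓝 (2 * Complex.I)) := by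
    have h1 : Tendsto (fun r : ℝ => E r - 1) atTop (𝓝 (0 - 1)) := hE.sub_const 1
    have h2 := (tendsto_const_nhds (x := -2 * Complex.I)).div h1 (by norm_num)
    convert h2 using 2
    norm_num
    ring
  refine Tendsto.congr' ?_ hmain
  filter_upwards [hev] with r hr
  have hx := Complex.exp_ne_zero (S r * Complex.I)
  have hy := Complex.exp_ne_zero (-(S r * Complex.I))
  have hxy : Complex.exp (-(S r * Complex.I)) * Complex.exp (S r * Complex.I) = 1 := by
    rw [← Complex.exp_add]; simp
  have hE1 : E r ≠ 1 := by
    intro h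
    rw [h] at hr
    simp at hr
  have hEx : E r = Complex.exp (S r * Complex.I) * Complex.exp (S r * Complex.I) := by
    have harg2 : 2 * S r * Complex.I = S r * Complex.I + S r * Complex.I := by ring
    rw [show E r = Complex.exp (2 * S r * Complex.I) from rfl, harg2, Complex.exp_add]
  have hsin : Complex.sin (S r) = (Complex.exp (-(S r) * Complex.I)
      - Complex.exp ((S r) * Complex.I)) * Complex.I / 2 := by
    rw [Complex.sin]
  have hsin0 : Complex.sin (S r) ≠ 0 := by
    intro h
    rw [hsin] at h
    have h3 : Complex.exp (-(S r) * Complex.I) = Complex.exp ((S r) * Complex.I) := by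
      have h5 : (Complex.exp (-(S r) * Complex.I) - Complex.exp ((S r) * Complex.I))
          * Complex.I = 0 := by
        have h6 := congrArg (fun z : ℂ => z * 2) h
        simpa using h6
      rcases mul_eq_zero.mp h5 with h6 | h6
      · exact sub_eq_zero.mp h6
      · exact absurd h6 Complex.I_ne_zero
    rw [neg_mul] at h3
    apply hE1
    rw [hEx]
    nth_rewrite 1 [← h3]
    exact hxy
  have hnum : (Real.pi : ℂ) * Complex.I * (γ - (r:ℂ) * Complex.I - β) = -(S r * Complex.I) := by
    rw [hS_def]; ring
  have harg : (Real.pi : ℂ) * ((r:ℂ) * Complex.I + β - γ) = S r := by rw [hS_def]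
  symm
  rw [hnum, harg, div_eq_div_iff hsin0 (sub_ne_zero.mpr hE1)]
  rw [hsin, hEx]
  have hI : Complex.I * Complex.I = -1 := Complex.I_mul_I
  have hxy' : Complex.exp (-(S r * Complex.I)) * Complex.exp (S r * Complex.I) = 1 := hxy
  rw [show -S r * Complex.I = -(S r * Complex.I) from by ring]
  linear_combination (-(Complex.exp (S r * Complex.I))) * hxy'
    + (Complex.exp (-(S r * Complex.I)) - Complex.exp (S r * Complex.I)) * hI

/-- Confluence limit of the (1,2) Stokes multiplier: as `α → ∞` along the ray
`arg α = +π/2` (i.e. `α = r·i`),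
`(-e^{iπ(γ-α-β)}/sin(π(α+β-γ))) · α^{γ-2β} · Γ(β+1-α)/Γ(γ+1-α-β) · π/(Γ(β)Γ(β+1-γ))`
tends to `2πi e^{iπ(γ-2β)}/(Γ(β)Γ(β+1-γ))`. -/
theorem stokes_multiplier_12_limit (β γ : ℂ)
    (h1 : ∀ m : ℕ, β ≠ -(m : ℂ)) (h2 : ∀ m : ℕ, β + 1 - γ ≠ -(m : ℂ)) :
    Tendsto (fun r : ℝ =>
        (-Complex.exp ((Real.pi : ℂ) * Complex.I * (γ - (r : ℂ) * Complex.I - β)) /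
            Complex.sin ((Real.pi : ℂ) * ((r : ℂ) * Complex.I + β - γ))) *
          (((r : ℂ) * Complex.I) ^ (γ - 2 * β) *
            (Complex.Gamma (β + 1 - (r : ℂ) * Complex.I) /
              Complex.Gamma (γ + 1 - (r : ℂ) * Complex.I - β))) *
          ((Real.pi : ℂ) / (Complex.Gamma β * Complex.Gamma (β + 1 - γ))))
      atTop
      (nhds (2 * (Real.pi : ℂ) * Complex.I *
          Complex.exp ((Real.pi : ℂ) * Complex.I * (γ - 2 * β)) /
        (Complex.Gamma β * Complex.Gamma (β + 1 - γ)))) := by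
  set δ : ℂ := γ - 2 * β with hδ
  set C : ℂ := (Real.pi : ℂ) / (Complex.Gamma β * Complex.Gamma (β + 1 - γ)) with hC
  have hlim := ((A_tendsto β γ).mul ((phase_tendsto δ β).mul (F_tendsto δ β))).mul_const C
  have hval : 2 * Complex.I * (Complex.exp (δ * ((Real.pi : ℂ) * Complex.I)) * 1) * C
      = 2 * (Real.pi : ℂ) * Complex.I * Complex.exp ((Real.pi : ℂ) * Complex.I * δ) /
        (Complex.Gamma β * Complex.Gamma (β + 1 - γ)) := by
    rw [show δ * ((Real.pi : ℂ) * Complex.I) = (Real.pi : ℂ) * Complex.I * δ from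
      mul_comm _ _, hC]
    ring
  rw [← hval]
  refine Tendsto.congr' ?_ hlim
  filter_upwards [eventually_ge_atTop (1:ℝ)] with r hr
  have hrI : (r:ℂ) * Complex.I ≠ 0 :=
    mul_ne_zero (Complex.ofReal_ne_zero.mpr (by linarith)) Complex.I_ne_zero
  have hmid : Complex.exp (δ * (Complex.log ((r:ℂ) * Complex.I)
        - Complex.log (β + 1 - (r:ℂ) * Complex.I)))
      * (Complex.exp (δ * Complex.log (β + 1 - (r:ℂ) * Complex.I))
        * Complex.Gamma (β + 1 - (r:ℂ) * Complex.I)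
        / Complex.Gamma (β + 1 - (r:ℂ) * Complex.I + δ))
      = ((r:ℂ) * Complex.I) ^ δ
        * (Complex.Gamma (β + 1 - (r:ℂ) * Complex.I)
          / Complex.Gamma (γ + 1 - (r:ℂ) * Complex.I - β)) := by
    rw [show γ + 1 - (r:ℂ) * Complex.I - β = β + 1 - (r:ℂ) * Complex.I + δ from by
      rw [hδ]; ring]
    rw [Complex.cpow_def_of_ne_zero hrI]
    rw [show Complex.log ((r:ℂ) * Complex.I) * δ
        = δ * (Complex.log ((r:ℂ) * Complex.I) - Complex.log (β + 1 - (r:ℂ) * Complex.I))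
          + δ * Complex.log (β + 1 - (r:ℂ) * Complex.I) from by ring]
    rw [Complex.exp_add]
    ring
  rw [hmid]
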